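/- Let k ≥ 1, let a : Fin (2k) → ℕ with a i > 0 for all i, and let m : ℕ satisfy ∏_i a i = m². In the field RatFunc ℚ, let ι = Fin (2k) ⊕ Fin 2 and define v : ι → RatFunc ℚ by v (inl i) = (a i) · X, v (inr 0) = m · X^{4k}, and v (inr 1) = m · X^{2k}. Suppose π is a finite partition of ι into nonempty blocks, d assigns to each block a distinguished element d(B) ∈ B, and ε assigns to each block a sign in {1, −1} with ε B₀ = 1 for at least one block B₀, such that ∑_{B ∈ π} ε B · (v (d B) / ∏_{j ∈ B, j ≠ d B} v j) = X^{3k} − X^k. Then π has exactly two blocks B₁ and B₂: inr 0 ∈ B₁ with d(B₁) = inr 0, ε B₁ = 1, B₁ contains exactly k of the indices inl i, and the product of the corresponding a i equals m; and inr 1 ∈ B₂ with d(B₂) = inr 1, ε B₂ = −1, B₂ contains the remaining k indices inl i, whose a i likewise have product m. -/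

import Mathlib

open Finset Polynomial

private def dgF (k : ℕ) : Fin (2 * k) ⊕ Fin 2 → ℕ :=
  Sum.elim (fun _ => 1) (fun x => if x = 0 then 4 * k else 2 * k)

private def cfF (k m : ℕ) (a : Fin (2 * k) → ℕ) : Fin (2 * k) ⊕ Fin 2 → ℚ :=
  Sum.elim (fun i => (a i : ℚ)) (fun _ => (m : ℚ))

private lemma sum_dgF (k : ℕ) (B : Finset (Fin (2 * k) ⊕ Fin 2)) :
    ∑ j ∈ B, dgF k j =
      (Finset.univ.filter (fun i : Fin (2 * k) => Sum.inl i ∈ B)).card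
        + (if Sum.inr 0 ∈ B then 4 * k else 0) + (if Sum.inr 1 ∈ B then 2 * k else 0) := by
  classical
  have hpt : ∀ j ∈ B, dgF k j =
      (if j.isLeft then 1 else 0) + (if j = Sum.inr 0 then 4 * k else 0)
        + (if j = Sum.inr 1 then 2 * k else 0) := by
    rintro (i | x) -
    · simp [dgF]
    · fin_cases x <;> simp [dgF]
  rw [Finset.sum_congr rfl hpt, Finset.sum_add_distrib, Finset.sum_add_distrib,
    Finset.sum_ite_eq' B (Sum.inr 0), Finset.sum_ite_eq' B (Sum.inr 1)]
  have himg : B.filter (fun j => j.isLeft) =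
      (Finset.univ.filter (fun i : Fin (2 * k) => Sum.inl i ∈ B)).image Sum.inl := by
    ext j
    rcases j with i | x <;> simp
  have : ∑ j ∈ B, (if j.isLeft then 1 else 0) = (B.filter (fun j => j.isLeft)).card := by
    rw [Finset.card_filter]
  rw [this, himg, Finset.card_image_of_injective _ Sum.inl_injective]

private lemma prod_cfF (k m : ℕ) (a : Fin (2 * k) → ℕ) (B : Finset (Fin (2 * k) ⊕ Fin 2)) :
    ∏ j ∈ B, cfF k m a j =
      (∏ i ∈ Finset.univ.filter (fun i : Fin (2 * k) => Sum.inl i ∈ B), (a i : ℚ))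
        * (if Sum.inr 0 ∈ B then (m : ℚ) else 1) * (if Sum.inr 1 ∈ B then (m : ℚ) else 1) := by
  classical
  have hpt : ∀ j ∈ B, cfF k m a j =
      (Sum.elim (fun i => (a i : ℚ)) (fun _ => (1:ℚ)) j) * (if j = Sum.inr 0 then (m:ℚ) else 1)
        * (if j = Sum.inr 1 then (m:ℚ) else 1) := by
    rintro (i | x) -
    · simp [cfF]
    · fin_cases x <;> simp [cfF]
  rw [Finset.prod_congr rfl hpt, Finset.prod_mul_distrib, Finset.prod_mul_distrib,
    Finset.prod_ite_eq' B (Sum.inr 0), Finset.prod_ite_eq' B (Sum.inr 1)]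
  have himg : ∏ j ∈ B, (Sum.elim (fun i => (a i : ℚ)) (fun _ => (1:ℚ)) j)
      = ∏ i ∈ Finset.univ.filter (fun i : Fin (2 * k) => Sum.inl i ∈ B), (a i : ℚ) := by
    have hsub : (Finset.univ.filter (fun i : Fin (2 * k) => Sum.inl i ∈ B)).image Sum.inl ⊆ B := by
      intro j hj
      simp only [Finset.mem_image, Finset.mem_filter, Finset.mem_univ, true_and] at hj
      obtain ⟨i, hi, rfl⟩ := hj
      exact hi
    have hone : ∀ j ∈ B, j ∉ (Finset.univ.filter (fun i : Fin (2 * k) => Sum.inl i ∈ B)).image Sum.inl →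
        (Sum.elim (fun i => (a i : ℚ)) (fun _ => (1:ℚ)) j) = 1 := by
      rintro (i | x) hj hnj
      · exfalso; apply hnj; simp [hj]
      · rfl
    calc ∏ j ∈ B, (Sum.elim (fun i => (a i : ℚ)) (fun _ => (1:ℚ)) j)
        = ∏ j ∈ (Finset.univ.filter (fun i : Fin (2 * k) => Sum.inl i ∈ B)).image Sum.inl,
            (Sum.elim (fun i => (a i : ℚ)) (fun _ => (1:ℚ)) j) := (Finset.prod_subset hsub hone).symm
      _ = ∏ i ∈ Finset.univ.filter (fun i : Fin (2 * k) => Sum.inl i ∈ B),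
            (Sum.elim (fun i => (a i : ℚ)) (fun _ => (1:ℚ)) (Sum.inl i)) :=
          Finset.prod_image (fun x _ y _ h => Sum.inl_injective h)
      _ = ∏ i ∈ Finset.univ.filter (fun i : Fin (2 * k) => Sum.inl i ∈ B), (a i : ℚ) := by simp
  rw [himg]

theorem stmt_15 (k : ℕ) (hk : 1 ≤ k) (a : Fin (2 * k) → ℕ) (ha : ∀ i, 0 < a i)
    (m : ℕ) (hm : ∏ i, a i = m ^ 2)
    (v : Fin (2 * k) ⊕ Fin 2 → RatFunc ℚ)
    (hv1 : ∀ i, v (Sum.inl i) = (a i : RatFunc ℚ) * RatFunc.X)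
    (hv2 : v (Sum.inr 0) = (m : RatFunc ℚ) * RatFunc.X ^ (4 * k))
    (hv3 : v (Sum.inr 1) = (m : RatFunc ℚ) * RatFunc.X ^ (2 * k))
    (π : Finpartition (Finset.univ : Finset (Fin (2 * k) ⊕ Fin 2)))
    (d : Finset (Fin (2 * k) ⊕ Fin 2) → Fin (2 * k) ⊕ Fin 2)
    (hd : ∀ B ∈ π.parts, d B ∈ B)
    (ε : Finset (Fin (2 * k) ⊕ Fin 2) → ℤ)
    (hε : ∀ B ∈ π.parts, ε B = 1 ∨ ε B = -1)
    (hε1 : ∃ B₀ ∈ π.parts, ε B₀ = 1)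
    (h : ∑ B ∈ π.parts, (ε B : RatFunc ℚ) * (v (d B) / ∏ j ∈ B.erase (d B), v j)
      = RatFunc.X ^ (3 * k) - RatFunc.X ^ k) :
    ∃ B₁ B₂ : Finset (Fin (2 * k) ⊕ Fin 2), B₁ ≠ B₂ ∧ π.parts = {B₁, B₂} ∧
      Sum.inr 0 ∈ B₁ ∧ d B₁ = Sum.inr 0 ∧ ε B₁ = 1 ∧
      (Finset.univ.filter (fun i : Fin (2 * k) => Sum.inl i ∈ B₁)).card = k ∧
      (∏ i ∈ Finset.univ.filter (fun i : Fin (2 * k) => Sum.inl i ∈ B₁), a i = m) ∧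
      Sum.inr 1 ∈ B₂ ∧ d B₂ = Sum.inr 1 ∧ ε B₂ = -1 ∧
      (Finset.univ.filter (fun i : Fin (2 * k) => Sum.inl i ∈ B₂)).card = k ∧
      (∏ i ∈ Finset.univ.filter (fun i : Fin (2 * k) => Sum.inl i ∈ B₂), a i = m) := by
  classical
  have hm0 : 0 < m := by
    rcases Nat.eq_zero_or_pos m with h0 | h'
    · exfalso
      have hpos : 0 < ∏ i, a i := Finset.prod_pos (fun i _ => ha i)
      rw [hm, h0] at hpos
      simp at hpos
    · exact h'
  set E := algebraMap ℚ (RatFunc ℚ) with hE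
  set A := algebraMap ℚ[X] (RatFunc ℚ) with hA
  set N := ∑ j : Fin (2 * k) ⊕ Fin 2, dgF k j with hN
  set n : Finset (Fin (2 * k) ⊕ Fin 2) → ℕ :=
    fun B => N - (∑ j ∈ B, dgF k j) + 2 * dgF k (d B) with hn
  set c : Finset (Fin (2 * k) ⊕ Fin 2) → ℚ :=
    fun B => cfF k m a (d B) / ∏ j ∈ B.erase (d B), cfF k m a j with hc
  have hcf_pos : ∀ j, 0 < cfF k m a j := by
    rintro (i | x)
    · simpa [cfF] using ha i
    · simpa [cfF] using hm0
  have hvj : ∀ j, v j = E (cfF k m a j) * RatFunc.X ^ (dgF k j) := by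
    rintro (i | x)
    · rw [hv1]; simp [cfF, dgF]
    · fin_cases x
      · rw [show Sum.inr (α := Fin (2*k)) (⟨0, by omega⟩ : Fin 2) = Sum.inr 0 from rfl, hv2]
        simp [cfF, dgF]
      · rw [show Sum.inr (α := Fin (2*k)) (⟨1, by omega⟩ : Fin 2) = Sum.inr 1 from rfl, hv3]
        simp [cfF, dgF]
  have hNle : ∀ B : Finset (Fin (2 * k) ⊕ Fin 2), ∑ j ∈ B, dgF k j ≤ N :=
    fun B => Finset.sum_le_sum_of_subset (Finset.subset_univ B)
  have hc_pos : ∀ B, 0 < c B := by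
    intro B
    exact div_pos (hcf_pos _) (Finset.prod_pos (fun j _ => hcf_pos j))
  -- the core per-block identity
  have hblock : ∀ B ∈ π.parts,
      (ε B : RatFunc ℚ) * (v (d B) / ∏ j ∈ B.erase (d B), v j) * RatFunc.X ^ N
        = A (Polynomial.monomial (n B) ((ε B : ℚ) * c B)) := by
    intro B hB
    have hmem := hd B hB
    have hse : ∑ j ∈ B.erase (d B), dgF k j + dgF k (d B) = ∑ j ∈ B, dgF k j :=
      Finset.sum_erase_add _ _ hmem
    have hsle := hNle B
    have hexp : n B + ∑ j ∈ B.erase (d B), dgF k j = N + dgF k (d B) := by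
      simp only [hn]
      omega
    have hPpos : (0:ℚ) < ∏ j ∈ B.erase (d B), cfF k m a j :=
      Finset.prod_pos (fun j _ => hcf_pos j)
    have hPne : (∏ j ∈ B.erase (d B), cfF k m a j) ≠ 0 := ne_of_gt hPpos
    have hEPne : E (∏ j ∈ B.erase (d B), cfF k m a j) ≠ 0 :=
      (map_ne_zero_iff E E.injective).mpr hPne
    have hprodv : ∏ j ∈ B.erase (d B), v j
        = E (∏ j ∈ B.erase (d B), cfF k m a j)
            * RatFunc.X ^ (∑ j ∈ B.erase (d B), dgF k j) := by
      rw [map_prod, ← Finset.prod_pow_eq_pow_sum, ← Finset.prod_mul_distrib]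
      exact Finset.prod_congr rfl (fun j _ => hvj j)
    have hmon : A (Polynomial.monomial (n B) ((ε B : ℚ) * c B))
        = E ((ε B : ℚ) * c B) * RatFunc.X ^ (n B) := by
      rw [← Polynomial.C_mul_X_pow_eq_monomial, map_mul, map_pow, hA,
        RatFunc.algebraMap_C, RatFunc.algebraMap_X, hE]
      rw [RingHom.ext_rat (algebraMap ℚ (RatFunc ℚ)) RatFunc.C]
    have hXq : (RatFunc.X : RatFunc ℚ) ^ dgF k (d B) * RatFunc.X ^ N
        / RatFunc.X ^ (∑ j ∈ B.erase (d B), dgF k j) = RatFunc.X ^ n B := by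
      rw [← pow_add,
        show dgF k (d B) + N = n B + ∑ j ∈ B.erase (d B), dgF k j from by omega, pow_add]
      exact mul_div_cancel_right₀ _ (pow_ne_zero _ RatFunc.X_ne_zero)
    rw [hmon, hprodv, hvj (d B), hc]
    simp only
    rw [map_mul, map_div₀, map_intCast]
    calc ((ε B : ℤ) : RatFunc ℚ)
          * (E (cfF k m a (d B)) * RatFunc.X ^ dgF k (d B)
            / (E (∏ j ∈ B.erase (d B), cfF k m a j)
                * RatFunc.X ^ (∑ j ∈ B.erase (d B), dgF k j))) * RatFunc.X ^ N
        = ((ε B : ℤ) : RatFunc ℚ)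
            * (E (cfF k m a (d B)) / E (∏ j ∈ B.erase (d B), cfF k m a j))
            * (RatFunc.X ^ dgF k (d B) * RatFunc.X ^ N
              / RatFunc.X ^ (∑ j ∈ B.erase (d B), dgF k j)) := by
          rw [← div_mul_div_comm]; ring
      _ = ((ε B : ℤ) : RatFunc ℚ)
            * (E (cfF k m a (d B)) / E (∏ j ∈ B.erase (d B), cfF k m a j))
            * RatFunc.X ^ n B := by rw [hXq]
      _ = _ := by ring
  -- the polynomial identity
  have hQ : (∑ B ∈ π.parts, Polynomial.monomial (n B) ((ε B : ℚ) * c B))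
      = (Polynomial.X : ℚ[X]) ^ (N + 3 * k) - Polynomial.X ^ (N + k) := by
    apply RatFunc.algebraMap_injective
    rw [map_sum, map_sub, map_pow, map_pow, RatFunc.algebraMap_X]
    calc (∑ B ∈ π.parts, A (Polynomial.monomial (n B) ((ε B : ℚ) * c B)))
        = ∑ B ∈ π.parts,
            (ε B : RatFunc ℚ) * (v (d B) / ∏ j ∈ B.erase (d B), v j) * RatFunc.X ^ N :=
          Finset.sum_congr rfl (fun B hB => (hblock B hB).symm)
      _ = (∑ B ∈ π.parts, (ε B : RatFunc ℚ) * (v (d B) / ∏ j ∈ B.erase (d B), v j))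
            * RatFunc.X ^ N := (Finset.sum_mul _ _ _).symm
      _ = (RatFunc.X ^ (3 * k) - RatFunc.X ^ k) * RatFunc.X ^ N := by rw [h]
      _ = RatFunc.X ^ (N + 3 * k) - RatFunc.X ^ (N + k) := by
          rw [sub_mul, ← pow_add, ← pow_add, add_comm (3 * k) N, add_comm k N]
  have star : ∀ t : ℕ, (∑ B ∈ π.parts, if n B = t then (ε B : ℚ) * c B else 0)
      = (if t = N + 3 * k then 1 else 0) - (if t = N + k then 1 else 0) := by
    intro t
    have h1 := congrArg (fun P : ℚ[X] => P.coeff t) hQ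
    simpa only [Polynomial.finset_sum_coeff, Polynomial.coeff_monomial, Polynomial.coeff_sub,
      Polynomial.coeff_X_pow] using h1
  -- combinatorial setup
  have hfin2 : ∀ x : Fin 2, x = 0 ∨ x = 1 := by decide
  set tc : Finset (Fin (2 * k) ⊕ Fin 2) → ℕ :=
    fun B => (Finset.univ.filter (fun i : Fin (2 * k) => Sum.inl i ∈ B)).card with htc
  have hsB : ∀ B : Finset (Fin (2 * k) ⊕ Fin 2), ∑ j ∈ B, dgF k j
      = tc B + (if Sum.inr 0 ∈ B then 4 * k else 0) + (if Sum.inr 1 ∈ B then 2 * k else 0) :=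
    fun B => sum_dgF k B
  have hnunf : ∀ B, n B = N - (∑ j ∈ B, dgF k j) + 2 * dgF k (d B) := fun B => rfl
  have hdgF_inl : ∀ i : Fin (2 * k), dgF k (Sum.inl i) = 1 := fun i => rfl
  have hdgF0 : dgF k (Sum.inr 0) = 4 * k := rfl
  have hdgF1 : dgF k (Sum.inr 1) = 2 * k := by simp [dgF]
  have htc_le : ∀ B, tc B ≤ 2 * k := by
    intro B
    calc tc B ≤ (Finset.univ : Finset (Fin (2 * k))).card := Finset.card_filter_le _ _
      _ = 2 * k := by simp
  have htc_pos : ∀ (B) (i : Fin (2 * k)), Sum.inl i ∈ B → 1 ≤ tc B := by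
    intro B i hi
    exact Finset.card_pos.mpr ⟨i, by simp [hi]⟩
  have hdisjf : ∀ B ∈ π.parts, ∀ B' ∈ π.parts, B ≠ B' →
      Disjoint (Finset.univ.filter (fun i : Fin (2 * k) => Sum.inl i ∈ B))
        (Finset.univ.filter (fun i : Fin (2 * k) => Sum.inl i ∈ B')) := by
    intro B hB B' hB' hne
    rw [Finset.disjoint_left]
    intro i hi hi'
    simp only [Finset.mem_filter, Finset.mem_univ, true_and] at hi hi'
    exact hne (π.eq_of_mem_parts hB hB' hi hi')
  have hcount2 : ∀ B ∈ π.parts, ∀ B' ∈ π.parts, B ≠ B' → tc B + tc B' ≤ 2 * k := by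
    intro B hB B' hB' hne
    have hu := Finset.card_union_of_disjoint (hdisjf B hB B' hB' hne)
    have hle : ((Finset.univ.filter (fun i : Fin (2 * k) => Sum.inl i ∈ B))
        ∪ (Finset.univ.filter (fun i : Fin (2 * k) => Sum.inl i ∈ B'))).card ≤ 2 * k := by
      calc _ ≤ (Finset.univ : Finset (Fin (2 * k))).card :=
            Finset.card_le_card (Finset.subset_univ _)
        _ = 2 * k := by simp
    rw [hu] at hle
    exact hle
  have hcount3 : ∀ B ∈ π.parts, ∀ B' ∈ π.parts, ∀ B'' ∈ π.parts,
      B ≠ B' → B ≠ B'' → B' ≠ B'' → tc B + tc B' + tc B'' ≤ 2 * k := by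
    intro B hB B' hB' B'' hB'' h1 h2 h3
    have hd12 := hdisjf B hB B' hB' h1
    have hd13 := hdisjf B hB B'' hB'' h2
    have hd23 := hdisjf B' hB' B'' hB'' h3
    have hu1 := Finset.card_union_of_disjoint hd12
    have hu2 := Finset.card_union_of_disjoint
      (Finset.disjoint_union_left.mpr ⟨hd13, hd23⟩)
    have hle : (((Finset.univ.filter (fun i : Fin (2 * k) => Sum.inl i ∈ B))
        ∪ (Finset.univ.filter (fun i : Fin (2 * k) => Sum.inl i ∈ B')))
        ∪ (Finset.univ.filter (fun i : Fin (2 * k) => Sum.inl i ∈ B''))).card ≤ 2 * k := by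
      calc _ ≤ (Finset.univ : Finset (Fin (2 * k))).card :=
            Finset.card_le_card (Finset.subset_univ _)
        _ = 2 * k := by simp
    rw [hu2, hu1] at hle
    exact hle
  -- classification of blocks whose exponent is N + 3k
  have hU : ∀ B ∈ π.parts, n B = N + 3 * k →
      Sum.inr 0 ∈ B ∧ d B = Sum.inr 0 ∧ Sum.inr 1 ∉ B ∧ tc B = k := by
    intro B hB hnB
    have hmem := hd B hB
    have hsle := hNle B
    have hs := hsB B
    have htle := htc_le B
    have e1 := hnunf B
    rcases hdm : d B with i | x
    · rw [hdm] at hmem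
      have h1 := htc_pos B i hmem
      rw [hdm, hdgF_inl] at e1
      exfalso
      split_ifs at hs <;> omega
    · rcases hfin2 x with rfl | rfl
      · rw [hdm] at hmem
        rw [hdm, hdgF0] at e1
        have key : Sum.inr 1 ∉ B ∧ tc B = k := by
          by_cases h1' : Sum.inr 1 ∈ B
          · exfalso
            rw [if_pos hmem, if_pos h1'] at hs
            omega
          · refine ⟨h1', ?_⟩
            rw [if_pos hmem, if_neg h1'] at hs
            omega
        exact ⟨hmem, rfl, key.1, key.2⟩
      · rw [hdm] at hmem
        rw [hdm, hdgF1] at e1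
        exfalso
        rw [if_pos hmem] at hs
        by_cases h0 : Sum.inr 0 ∈ B
        · rw [if_pos h0] at hs; omega
        · rw [if_neg h0] at hs; omega
  -- extraction at N + 3k
  obtain ⟨B₁, hB₁, h0B₁⟩ := π.exists_mem (Finset.mem_univ (Sum.inr 0 : Fin (2 * k) ⊕ Fin 2))
  have h3 : (∑ B ∈ π.parts, if n B = N + 3 * k then (ε B : ℚ) * c B else 0) = 1 := by
    rw [star (N + 3 * k), if_pos rfl, if_neg (by omega)]
    norm_num
  have hsingle : (∑ B ∈ π.parts, if n B = N + 3 * k then (ε B : ℚ) * c B else 0)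
      = (if n B₁ = N + 3 * k then (ε B₁ : ℚ) * c B₁ else 0) := by
    apply Finset.sum_eq_single_of_mem B₁ hB₁
    intro B hB hne
    rw [if_neg]
    intro hnB
    obtain ⟨h0B, -, -, -⟩ := hU B hB hnB
    exact hne (π.eq_of_mem_parts hB hB₁ h0B h0B₁)
  rw [hsingle] at h3
  have hnB₁ : n B₁ = N + 3 * k := by
    by_contra hcon
    rw [if_neg hcon] at h3
    norm_num at h3
  rw [if_pos hnB₁] at h3
  obtain ⟨-, hdB₁, h1B₁, htcB₁⟩ := hU B₁ hB₁ hnB₁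
  have hsign₁ : ε B₁ = 1 ∧ c B₁ = 1 := by
    rcases hε B₁ hB₁ with hε' | hε'
    · rw [hε'] at h3
      push_cast at h3
      exact ⟨hε', by linarith⟩
    · exfalso
      rw [hε'] at h3
      push_cast at h3
      linarith [hc_pos B₁]
  -- the product over B₁
  have hPfB₁ : (∏ i ∈ Finset.univ.filter (fun i : Fin (2 * k) => Sum.inl i ∈ B₁), a i) = m := by
    have herase1 : Sum.inr 1 ∉ B₁.erase (Sum.inr 0) :=
      fun hmem' => h1B₁ (Finset.mem_of_mem_erase hmem')
    have hfilt : (Finset.univ.filter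
          (fun i : Fin (2 * k) => Sum.inl i ∈ B₁.erase (Sum.inr 0)))
        = (Finset.univ.filter (fun i : Fin (2 * k) => Sum.inl i ∈ B₁)) := by
      ext i
      simp [Finset.mem_erase]
    have hcval : c B₁
        = (m : ℚ) / ∏ i ∈ Finset.univ.filter (fun i : Fin (2 * k) => Sum.inl i ∈ B₁), (a i : ℚ) := by
      rw [hc]
      simp only
      rw [hdB₁, prod_cfF, hfilt, if_neg (Finset.notMem_erase _ _), if_neg herase1]
      simp [cfF]
    have h1 := hsign₁.2
    rw [hcval] at h1
    have hPpos : (0:ℚ) < ∏ i ∈ Finset.univ.filter (fun i : Fin (2 * k) => Sum.inl i ∈ B₁), (a i : ℚ) :=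
      Finset.prod_pos (fun i _ => by exact_mod_cast ha i)
    rw [div_eq_one_iff_eq (ne_of_gt hPpos)] at h1
    exact_mod_cast h1.symm
  -- block of inr 1
  obtain ⟨B₂, hB₂, h1B₂⟩ := π.exists_mem (Finset.mem_univ (Sum.inr 1 : Fin (2 * k) ⊕ Fin 2))
  have hne12 : B₁ ≠ B₂ := fun hEq => h1B₁ (hEq ▸ h1B₂)
  have h0B₂ : Sum.inr 0 ∉ B₂ := fun h0' => hne12 (π.eq_of_mem_parts hB₁ hB₂ h0B₁ h0')
  have hdB₂ : d B₂ = Sum.inr 1 := by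
    rcases hdm : d B₂ with i | x
    · exfalso
      have hsum : (∑ B ∈ π.parts, if n B = N + k then (ε B : ℚ) * c B else 0) = -1 := by
        rw [star (N + k), if_neg (by omega), if_pos rfl]
        norm_num
      obtain ⟨B, hB, hBne⟩ := Finset.exists_ne_zero_of_sum_ne_zero
        (show (∑ B ∈ π.parts, if n B = N + k then (ε B : ℚ) * c B else 0) ≠ 0 by
          rw [hsum]; norm_num)
      have hnB : n B = N + k := by
        by_contra hcon
        rw [if_neg hcon] at hBne
        exact hBne rfl
      have hBne1 : B ≠ B₁ := by
        rintro rfl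
        omega
      have h0B : Sum.inr 0 ∉ B := fun h0' => hBne1 (π.eq_of_mem_parts hB hB₁ h0' h0B₁)
      have hs := hsB B
      have hsle := hNle B
      have e1 := hnunf B
      by_cases hBB2 : B = B₂
      · subst hBB2
        rw [if_neg h0B, if_pos h1B₂] at hs
        rw [hdm, hdgF_inl] at e1
        have h1le := htc_pos B i (hdm ▸ hd B hB)
        omega
      · have h1B : Sum.inr 1 ∉ B := fun h1' => hBB2 (π.eq_of_mem_parts hB hB₂ h1' h1B₂)
        rw [if_neg h0B, if_neg h1B] at hs
        rcases hdmB : d B with i' | x'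
        · have h1le := htc_pos B i' (hdmB ▸ hd B hB)
          rw [hdmB, hdgF_inl] at e1
          have h1le2 := htc_pos B₂ i (hdm ▸ hd B₂ hB₂)
          have hcnt := hcount3 B hB B₁ hB₁ B₂ hB₂ hBne1 hBB2 hne12
          omega
        · have hmem' := hd B hB
          rw [hdmB] at hmem'
          rcases hfin2 x' with rfl | rfl
          · exact h0B hmem'
          · exact h1B hmem'
    · rcases hfin2 x with rfl | rfl
      · exfalso
        exact h0B₂ (hdm ▸ hd B₂ hB₂)
      · exact rfl
  -- t B₂ = k
  have hs2 := hsB B₂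
  rw [if_neg h0B₂, if_pos h1B₂] at hs2
  have e2 := hnunf B₂
  rw [hdB₂, hdgF1] at e2
  have hsle2 := hNle B₂
  have htcB₂ : tc B₂ = k := by
    by_contra hcon
    have hcnt := hcount2 B₁ hB₁ B₂ hB₂ hne12
    have hlt : tc B₂ < k := by omega
    have hsum := star (n B₂)
    rw [if_neg (by omega), if_neg (by omega)] at hsum
    have hsingle2 : (∑ B ∈ π.parts, if n B = n B₂ then (ε B : ℚ) * c B else 0)
        = (if n B₂ = n B₂ then (ε B₂ : ℚ) * c B₂ else 0) := by
      apply Finset.sum_eq_single_of_mem B₂ hB₂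
      intro B hB hne
      rw [if_neg]
      intro hnB
      by_cases hBB1 : B = B₁
      · rw [hBB1] at hnB
        omega
      · have h0B : Sum.inr 0 ∉ B := fun h0' => hBB1 (π.eq_of_mem_parts hB hB₁ h0' h0B₁)
        have h1B : Sum.inr 1 ∉ B := fun h1' => hne (π.eq_of_mem_parts hB hB₂ h1' h1B₂)
        have hs := hsB B
        rw [if_neg h0B, if_neg h1B] at hs
        have e1 := hnunf B
        have hsle := hNle B
        rcases hdmB : d B with i' | x'
        · have h1le := htc_pos B i' (hdmB ▸ hd B hB)
          rw [hdmB, hdgF_inl] at e1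
          omega
        · have hmem' := hd B hB
          rw [hdmB] at hmem'
          rcases hfin2 x' with rfl | rfl
          · exact h0B hmem'
          · exact h1B hmem'
    rw [hsingle2, if_pos rfl] at hsum
    rcases hε B₂ hB₂ with hε' | hε' <;> rw [hε'] at hsum <;> push_cast at hsum <;>
      linarith [hc_pos B₂]
  have hnB₂ : n B₂ = N + k := by omega
  -- extraction at N + k
  have hsumk : (∑ B ∈ π.parts, if n B = N + k then (ε B : ℚ) * c B else 0) = -1 := by
    rw [star (N + k), if_neg (by omega), if_pos rfl]
    norm_num
  have hsinglek : (∑ B ∈ π.parts, if n B = N + k then (ε B : ℚ) * c B else 0)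
      = (if n B₂ = N + k then (ε B₂ : ℚ) * c B₂ else 0) := by
    apply Finset.sum_eq_single_of_mem B₂ hB₂
    intro B hB hne
    rw [if_neg]
    intro hnB
    by_cases hBB1 : B = B₁
    · rw [hBB1] at hnB
      omega
    · have h0B : Sum.inr 0 ∉ B := fun h0' => hBB1 (π.eq_of_mem_parts hB hB₁ h0' h0B₁)
      have h1B : Sum.inr 1 ∉ B := fun h1' => hne (π.eq_of_mem_parts hB hB₂ h1' h1B₂)
      have hs := hsB B
      rw [if_neg h0B, if_neg h1B] at hs
      have e1 := hnunf B
      have hsle := hNle B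
      rcases hdmB : d B with i' | x'
      · have h1le := htc_pos B i' (hdmB ▸ hd B hB)
        rw [hdmB, hdgF_inl] at e1
        have hcnt := hcount3 B hB B₁ hB₁ B₂ hB₂ hBB1 hne hne12
        omega
      · have hmem' := hd B hB
        rw [hdmB] at hmem'
        rcases hfin2 x' with rfl | rfl
        · exact h0B hmem'
        · exact h1B hmem'
  rw [hsinglek, if_pos hnB₂] at hsumk
  have hsign₂ : ε B₂ = -1 ∧ c B₂ = 1 := by
    rcases hε B₂ hB₂ with hε' | hε'
    · exfalso
      rw [hε'] at hsumk
      push_cast at hsumk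
      linarith [hc_pos B₂]
    · rw [hε'] at hsumk
      push_cast at hsumk
      exact ⟨hε', by linarith⟩
  -- the product over B₂
  have hPfB₂ : (∏ i ∈ Finset.univ.filter (fun i : Fin (2 * k) => Sum.inl i ∈ B₂), a i) = m := by
    have herase0 : Sum.inr 0 ∉ B₂.erase (Sum.inr 1) :=
      fun hmem' => h0B₂ (Finset.mem_of_mem_erase hmem')
    have hfilt : (Finset.univ.filter
          (fun i : Fin (2 * k) => Sum.inl i ∈ B₂.erase (Sum.inr 1)))
        = (Finset.univ.filter (fun i : Fin (2 * k) => Sum.inl i ∈ B₂)) := by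
      ext i
      simp [Finset.mem_erase]
    have hcval : c B₂
        = (m : ℚ) / ∏ i ∈ Finset.univ.filter (fun i : Fin (2 * k) => Sum.inl i ∈ B₂), (a i : ℚ) := by
      rw [hc]
      simp only
      rw [hdB₂, prod_cfF, hfilt, if_neg herase0, if_neg (Finset.notMem_erase _ _)]
      simp [cfF]
    have h1 := hsign₂.2
    rw [hcval] at h1
    have hPpos : (0:ℚ) < ∏ i ∈ Finset.univ.filter (fun i : Fin (2 * k) => Sum.inl i ∈ B₂), (a i : ℚ) :=
      Finset.prod_pos (fun i _ => by exact_mod_cast ha i)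
    rw [div_eq_one_iff_eq (ne_of_gt hPpos)] at h1
    exact_mod_cast h1.symm
  -- the partition has exactly these two parts
  have hparts : π.parts = {B₁, B₂} := by
    apply Finset.Subset.antisymm
    · intro B hB
      simp only [Finset.mem_insert, Finset.mem_singleton]
      by_contra hcon
      push_neg at hcon
      obtain ⟨hne1, hne2⟩ := hcon
      obtain ⟨j, hj⟩ := π.nonempty_of_mem_parts hB
      rcases j with i | x
      · have h1le := htc_pos B i hj
        have hcnt := hcount3 B hB B₁ hB₁ B₂ hB₂ hne1 hne2 hne12
        omega
      · rcases hfin2 x with rfl | rfl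
        · exact hne1 (π.eq_of_mem_parts hB hB₁ hj h0B₁)
        · exact hne2 (π.eq_of_mem_parts hB hB₂ hj h1B₂)
    · intro B hB
      simp only [Finset.mem_insert, Finset.mem_singleton] at hB
      rcases hB with rfl | rfl
      exacts [hB₁, hB₂]
  exact ⟨B₁, B₂, hne12, hparts, h0B₁, hdB₁, hsign₁.1, htcB₁, hPfB₁,
    h1B₂, hdB₂, hsign₂.1, htcB₂, hPfB₂⟩
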